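/- For i = 1,…,d let A_i ∈ ℂ^{n_i×n_i}, and let 𝐀 := Σ_{i=1}^d I_{n_d}⊗⋯⊗I_{n_{i+1}}⊗A_i⊗I_{n_{i−1}}⊗⋯⊗I_{n_1} be their Kronecker sum. Then the field of values of 𝐀 equals the Minkowski sum of the fields of values of the A_i: 𝕎(𝐀) = 𝕎(A_1) + 𝕎(A_2) + ⋯ + 𝕎(A_d). -/

import Mathlib

open Matrix

/-- Kronecker sum `Σⱼ I ⊗ ⋯ ⊗ Aⱼ ⊗ ⋯ ⊗ I`, encoded entrywise on the (dependent)
product index set. -/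
noncomputable def kronSum {d : ℕ} (N : Fin d → ℕ)
    (B : ∀ j, Matrix (Fin (N j)) (Fin (N j)) ℂ) :
    Matrix (∀ j, Fin (N j)) (∀ j, Fin (N j)) ℂ :=
  ∑ j, Matrix.of fun p q =>
    B j (p j) (q j) * ∏ l ∈ Finset.univ.erase j, (if p l = q l then (1 : ℂ) else 0)

/-- The field of values (numerical range) `𝕎(A) = {xᴴAx : xᴴx = 1}`. -/
def fov {ι : Type} [Fintype ι] (A : Matrix ι ι ℂ) : Set ℂ :=
  { c | ∃ x : ι → ℂ, star x ⬝ᵥ x = 1 ∧ c = star x ⬝ᵥ (A *ᵥ x) }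

section helpers
variable {ι : Type} [Fintype ι]

lemma dot_conj (x y : ι → ℂ) : star y ⬝ᵥ x = starRingEnd ℂ (star x ⬝ᵥ y) := by
  simp only [dotProduct, map_sum, _root_.map_mul, Pi.star_apply, RingHomCompTriple.comp_apply,
    Complex.conj_conj]
  exact Finset.sum_congr rfl fun i _ => by
    simp only [Pi.star_apply, RCLike.star_def, Complex.conj_conj]
    ring

lemma dot_star_self (v : ι → ℂ) :
    star v ⬝ᵥ v = ((∑ i, Complex.normSq (v i) : ℝ) : ℂ) := by
  push_cast
  simp [dotProduct, Complex.normSq_eq_conj_mul_self]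

lemma dot_star_self_eq_zero' (v : ι → ℂ) (h : star v ⬝ᵥ v = 0) : v = 0 := by
  rw [dot_star_self] at h
  have h' : (∑ i, Complex.normSq (v i)) = 0 := by exact_mod_cast h
  have h2 := (Finset.sum_eq_zero_iff_of_nonneg
    (fun i _ => Complex.normSq_nonneg (v i))).mp h'
  funext i
  exact Complex.normSq_eq_zero.mp (h2 i (Finset.mem_univ i))

lemma sesq_expand (A : Matrix ι ι ℂ) (c e : ℂ) (x y : ι → ℂ) :
    star (c • x + e • y) ⬝ᵥ (A *ᵥ (c • x + e • y)) =
      starRingEnd ℂ c * c * (star x ⬝ᵥ (A *ᵥ x)) + starRingEnd ℂ e * e * (star y ⬝ᵥ (A *ᵥ y))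
      + starRingEnd ℂ c * e * (star x ⬝ᵥ (A *ᵥ y))
      + starRingEnd ℂ e * c * (star y ⬝ᵥ (A *ᵥ x)) := by
  simp only [star_add, star_smul, mulVec_add, mulVec_smul, add_dotProduct, dotProduct_add,
    smul_dotProduct, dotProduct_smul, smul_eq_mul, RCLike.star_def]
  ring

lemma dot_expand (c e : ℂ) (x y : ι → ℂ) :
    star (c • x + e • y) ⬝ᵥ (c • x + e • y) =
      starRingEnd ℂ c * c * (star x ⬝ᵥ x) + starRingEnd ℂ e * e * (star y ⬝ᵥ y)
      + starRingEnd ℂ c * e * (star x ⬝ᵥ y) + starRingEnd ℂ e * c * (star y ⬝ᵥ x) := by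
  simp only [star_add, star_smul, add_dotProduct, dotProduct_add,
    smul_dotProduct, dotProduct_smul, smul_eq_mul, RCLike.star_def]
  ring

lemma sesq_smul_smul (A : Matrix ι ι ℂ) (c : ℂ) (x : ι → ℂ) :
    star (c • x) ⬝ᵥ (A *ᵥ (c • x)) = starRingEnd ℂ c * c * (star x ⬝ᵥ (A *ᵥ x)) := by
  simp only [star_smul, mulVec_smul, smul_dotProduct, dotProduct_smul, smul_eq_mul,
    RCLike.star_def]
  ring

lemma dot_smul_smul (c : ℂ) (x : ι → ℂ) :
    star (c • x) ⬝ᵥ (c • x) = starRingEnd ℂ c * c * (star x ⬝ᵥ x) := by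
  simp only [star_smul, smul_dotProduct, dotProduct_smul, smul_eq_mul, RCLike.star_def]
  ring

end helpers

theorem fov_convex {ι : Type} [Fintype ι] [DecidableEq ι] (A : Matrix ι ι ℂ) : Convex ℝ (fov A) := by
  rintro p ⟨x, hx, rfl⟩ q ⟨y, hy, rfl⟩ ta tb hta htb htab
  set a := star x ⬝ᵥ (A *ᵥ x) with ha
  set b := star y ⬝ᵥ (A *ᵥ y) with hb
  by_cases hab : a = b
  · refine ⟨y, hy, ?_⟩
    rw [hab, ← add_smul, htab, one_smul]
  -- nondegenerate case
  have hab' : a - b ≠ 0 := sub_ne_zero.mpr hab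
  set B : Matrix ι ι ℂ := (a - b)⁻¹ • (A - b • (1 : Matrix ι ι ℂ)) with hB
  have key : ∀ z : ι → ℂ, star z ⬝ᵥ (B *ᵥ z)
      = (a - b)⁻¹ * (star z ⬝ᵥ (A *ᵥ z) - b * (star z ⬝ᵥ z)) := by
    intro z
    simp only [hB, smul_mulVec, sub_mulVec, dotProduct_smul, dotProduct_sub, smul_eq_mul,
      smul_mulVec, one_mulVec]
    try ring
  have hBx : star x ⬝ᵥ (B *ᵥ x) = 1 := by
    rw [key, hx, mul_one, ← ha]
    exact inv_mul_cancel₀ hab'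
  have hBy : star y ⬝ᵥ (B *ᵥ y) = 0 := by
    rw [key, hy, mul_one, ← hb, sub_self, mul_zero]
  set w := star x ⬝ᵥ (B *ᵥ y) with hw
  set v := star y ⬝ᵥ (B *ᵥ x) with hv
  set c0 := w - starRingEnd ℂ v with hc0
  set u : ℂ := if c0 = 0 then 1 else (‖c0‖ : ℂ) / c0 with hu
  have huabs : ‖u‖ = 1 := by
    rw [hu]
    split_ifs with h
    · simp
    · rw [norm_div, Complex.norm_real, norm_norm,
        div_self (by simpa using h)]
  have huu : starRingEnd ℂ u * u = 1 := by
    have := Complex.mul_conj u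
    rw [Complex.normSq_eq_norm_sq, huabs] at this
    rw [mul_comm, this]; norm_num
  have hune : u ≠ 0 := by
    intro h; rw [h] at huabs; simp at huabs
  have him : (u * c0).im = 0 := by
    rw [hu]
    split_ifs with h
    · simp [h]
    · rw [div_mul_cancel₀ _ h]; simp
  set κ := u * w + starRingEnd ℂ u * v with hκ
  have hκim : κ.im = 0 := by
    have hdec : κ = u * c0 + (u * starRingEnd ℂ v + starRingEnd ℂ (u * starRingEnd ℂ v)) := by
      rw [hκ, hc0, _root_.map_mul, Complex.conj_conj]; ring
    rw [hdec, Complex.add_conj]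
    simp [him]
  set γ := κ.re with hγ
  have hκγ : κ = (γ : ℂ) := by
    apply Complex.ext <;> simp [hγ, hκim]
  set pxy := star x ⬝ᵥ y with hpxy
  set δ := 2 * (u * pxy).re with hδ
  have hδ' : u * pxy + starRingEnd ℂ (u * pxy) = (δ : ℂ) := by
    rw [Complex.add_conj, hδ]
  -- the path
  set z : ℝ → (ι → ℂ) := fun s => (s : ℂ) • x + (((1 - s : ℝ) : ℂ) * u) • y with hz
  set Nf : ℝ → ℝ := fun s => s ^ 2 + (1 - s) ^ 2 + s * (1 - s) * δ with hNf
  have hzN : ∀ s : ℝ, star (z s) ⬝ᵥ (z s) = ((Nf s : ℝ) : ℂ) := by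
    intro s
    rw [hz]
    rw [dot_expand ((s : ℂ)) ((((1 - s : ℝ) : ℂ)) * u) x y, hx, hy, dot_conj x y]
    simp only [_root_.map_mul, Complex.conj_ofReal, hNf]
    push_cast
    have hcc : starRingEnd ℂ u * starRingEnd ℂ pxy = starRingEnd ℂ (u * pxy) :=
      (map_mul (starRingEnd ℂ) u pxy).symm
    linear_combination ((1 - (s:ℂ)))^2 * huu + ((s:ℂ) * (1 - (s:ℂ))) * hδ'
      + ((s:ℂ) * (1 - (s:ℂ))) * hcc
  have hzB : ∀ s : ℝ, star (z s) ⬝ᵥ (B *ᵥ z s) = ((s ^ 2 + s * (1 - s) * γ : ℝ) : ℂ) := by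
    intro s
    rw [hz]
    rw [sesq_expand B ((s : ℂ)) ((((1 - s : ℝ) : ℂ)) * u) x y, hBx, hBy]
    simp only [_root_.map_mul, Complex.conj_ofReal]
    push_cast
    linear_combination ((s:ℂ) * (1 - (s:ℂ))) * hκγ
  -- positivity of the norm along the path
  have hNpos : ∀ s ∈ Set.Icc (0:ℝ) 1, 0 < Nf s := by
    intro s hs
    have hge : 0 ≤ Nf s := by
      have h1 := hzN s
      rw [dot_star_self] at h1
      have h2 : (∑ i, Complex.normSq (z s i)) = Nf s := by exact_mod_cast h1
      rw [← h2]
      exact Finset.sum_nonneg fun i _ => Complex.normSq_nonneg _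
    rcases lt_or_eq_of_le hge with hlt | hzero
    · exact hlt
    exfalso
    have hz0 : z s = 0 := by
      have h0 : star (z s) ⬝ᵥ (z s) = 0 := by rw [hzN s, ← hzero]; simp
      exact dot_star_self_eq_zero' _ h0
    -- derive s = 0
    have hxy : ((s:ℂ)) • x = -(((((1 - s : ℝ) : ℂ)) * u) • y) := by
      rw [eq_neg_iff_add_eq_zero]
      simp only [hz] at hz0
      exact hz0
    have hs2 : ((s:ℂ))^2 = 0 := by
      have e1 : star (((s:ℂ)) • x) ⬝ᵥ (B *ᵥ (((s:ℂ)) • x)) = ((s:ℂ))^2 := by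
        rw [sesq_smul_smul, hBx, Complex.conj_ofReal]; ring
      have e2 : star (((s:ℂ)) • x) ⬝ᵥ (B *ᵥ (((s:ℂ)) • x)) = 0 := by
        rw [hxy]
        rw [show -(((((1 - s : ℝ) : ℂ)) * u) • y) = ((-(((1 - s : ℝ) : ℂ)) * u)) • y by
          rw [neg_mul, neg_smul]]
        rw [sesq_smul_smul, hBy]; ring
      rw [← e1, e2]
    have hs0 : s = 0 := by
      have : (s:ℂ) = 0 := by
        exact pow_eq_zero_iff (n := 2) (by norm_num) |>.mp hs2
      exact_mod_cast this
    -- then y = 0, contradiction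
    rw [hs0] at hz0
    have hy0 : y = 0 := by
      have : ((((1:ℝ) - 0 : ℝ) : ℂ) * u) • y = 0 := by
        simp only [hz] at hz0
        simpa using hz0
      rcases smul_eq_zero.mp this with h' | h'
      · exfalso; apply hune; simpa using h'
      · exact h'
    rw [hy0] at hy
    simp at hy
  -- IVT
  set ph : ℝ → ℝ := fun s => (s ^ 2 + s * (1 - s) * γ) / Nf s with hph
  have hcont : ContinuousOn ph (Set.Icc 0 1) := by
    rw [hph]
    apply ContinuousOn.div
    · fun_prop
    · simp only [hNf]; fun_prop
    · intro s hs; exact (hNpos s hs).ne'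
  have hph0 : ph 0 = 0 := by simp [hph, hNf]
  have hph1 : ph 1 = 1 := by norm_num [hph, hNf]
  have hta1 : ta ≤ 1 := by linarith
  have hIVT := intermediate_value_Icc (by norm_num : (0:ℝ) ≤ 1) hcont
  rw [hph0, hph1] at hIVT
  obtain ⟨s₀, hs₀, hhs₀⟩ := hIVT ⟨hta, hta1⟩
  have hN₀ := hNpos s₀ hs₀
  set m : ℝ := Real.sqrt (Nf s₀) with hm
  have hmpos : 0 < m := Real.sqrt_pos.mpr hN₀
  have hmm : m * m = Nf s₀ := Real.mul_self_sqrt hN₀.le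
  set zz : ι → ℂ := (((m⁻¹ : ℝ) : ℂ)) • z s₀ with hzz
  have hzz1 : star zz ⬝ᵥ zz = 1 := by
    rw [hzz, dot_smul_smul, hzN s₀, Complex.conj_ofReal]
    have hr : (m⁻¹ : ℝ) * m⁻¹ * Nf s₀ = 1 := by
      rw [← hmm]; field_simp
    exact_mod_cast hr
  have hzzB : star zz ⬝ᵥ (B *ᵥ zz) = (ta : ℂ) := by
    rw [hzz, sesq_smul_smul, hzB s₀, Complex.conj_ofReal]
    have hinv : (m⁻¹ * m⁻¹ : ℝ) = (Nf s₀)⁻¹ := by rw [← mul_inv, hmm]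
    have hr2 : (m⁻¹ : ℝ) * m⁻¹ * (s₀ ^ 2 + s₀ * (1 - s₀) * γ) = ta := by
      rw [hinv, ← hhs₀]
      simp only [hph]
      rw [div_eq_mul_inv]
      ring
    exact_mod_cast hr2
  refine ⟨zz, hzz1, ?_⟩
  have hKey := key zz
  rw [hzzB, hzz1, mul_one] at hKey
  have h2 : star zz ⬝ᵥ (A *ᵥ zz) - b = (a - b) * (ta : ℂ) := by
    rw [hKey]; field_simp
  rw [Complex.real_smul, Complex.real_smul]
  have htab2 : (ta : ℂ) + (tb : ℂ) = 1 := by exact_mod_cast htab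
  linear_combination (-1 : ℂ) * h2 + b * htab2

lemma fov_nonempty {ι : Type} [Fintype ι] [DecidableEq ι] [Nonempty ι] (A : Matrix ι ι ℂ) :
    ∃ c, c ∈ fov A := by
  obtain ⟨i₀⟩ := ‹Nonempty ι›
  refine ⟨star (Pi.single i₀ (1:ℂ)) ⬝ᵥ (A *ᵥ Pi.single i₀ 1), Pi.single i₀ 1, ?_, rfl⟩
  simp [dotProduct, Pi.single_apply, apply_ite]

lemma sum_pair_reindex {α β : Type*} [Fintype α] [Fintype β] (e : β ≃ α) (F : α → α → ℂ) :
    ∑ p, ∑ q, F p q = ∑ p, ∑ q, F (e p) (e q) := by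
  rw [← Equiv.sum_comp e (fun p => ∑ q, F p q)]
  exact Finset.sum_congr rfl fun p _ => (Equiv.sum_comp e _).symm

lemma dot_sum_mulVec {ι κ : Type} [Fintype ι] [Fintype κ] (M : κ → Matrix ι ι ℂ) (x : ι → ℂ) :
    star x ⬝ᵥ ((∑ j, M j) *ᵥ x) = ∑ j, star x ⬝ᵥ (M j *ᵥ x) := by
  have h1 : ((∑ j, M j) *ᵥ x) = ∑ j, (M j *ᵥ x) := by
    funext p
    simp only [mulVec, dotProduct, Matrix.sum_apply, Finset.sum_mul, Finset.sum_apply]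
    exact Finset.sum_comm ..
  rw [h1]
  simp only [dotProduct, Finset.sum_apply, Finset.mul_sum]
  exact Finset.sum_comm ..

lemma prod_split {d : ℕ} (j : Fin d) (f : Fin d → ℂ) :
    ∏ i, f i = f j * ∏ l : {l : Fin d // l ≠ j}, f l.1 := by
  rw [← Finset.mul_prod_erase Finset.univ f (Finset.mem_univ j)]
  congr 1
  exact Finset.prod_subtype (Finset.univ.erase j)
    (fun x => by simp [Finset.mem_erase]) f

section reduction
variable {d : ℕ} {n : Fin d → ℕ}

/-- the reduced (partially evaluated) family of vectors -/
noncomputable def redVec (j : Fin d) (x : (∀ l, Fin (n l)) → ℂ)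
    (r : ∀ l : {l : Fin d // l ≠ j}, Fin (n l.1)) : Fin (n j) → ℂ :=
  fun a => x ((Equiv.piSplitAt j (fun l => Fin (n l))).symm (a, r))

lemma red_dot (j : Fin d) (x : (∀ l, Fin (n l)) → ℂ) :
    star x ⬝ᵥ x = ∑ r, star (redVec j x r) ⬝ᵥ (redVec j x r) := by
  classical
  rw [show (star x ⬝ᵥ x) = ∑ p, star (x p) * x p from rfl]
  rw [← Equiv.sum_comp (Equiv.piSplitAt j (fun l => Fin (n l))).symm
      (fun p => star (x p) * x p)]
  rw [Fintype.sum_prod_type]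
  rw [Finset.sum_comm]
  rfl

lemma red_form (j : Fin d) (A : Matrix (Fin (n j)) (Fin (n j)) ℂ)
    (x : (∀ l, Fin (n l)) → ℂ) :
    star x ⬝ᵥ ((Matrix.of fun p q => A (p j) (q j) *
        ∏ l ∈ Finset.univ.erase j, (if p l = q l then (1:ℂ) else 0)) *ᵥ x)
      = ∑ r, star (redVec j x r) ⬝ᵥ (A *ᵥ redVec j x r) := by
  classical
  set σ := Equiv.piSplitAt j (fun l => Fin (n l)) with hσ
  have hj : ∀ (a : Fin (n j)) r, (σ.symm (a, r)) j = a := by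
    intro a r; simp [hσ, Equiv.piSplitAt_symm_apply]
  have hne : ∀ (a : Fin (n j)) r (l : Fin d) (h : l ≠ j), (σ.symm (a, r)) l = r ⟨l, h⟩ := by
    intro a r l h; simp [hσ, Equiv.piSplitAt_symm_apply, h]
  have hprod : ∀ (a b : Fin (n j)) r s,
      (∏ l ∈ Finset.univ.erase j,
        (if (σ.symm (a, r)) l = (σ.symm (b, s)) l then (1:ℂ) else 0))
        = if r = s then 1 else 0 := by
    intro a b r s
    by_cases hrs : r = s
    · subst hrs
      rw [if_pos rfl]
      apply Finset.prod_eq_one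
      intro l hl
      have hlj : l ≠ j := Finset.ne_of_mem_erase hl
      rw [hne a r l hlj, hne b r l hlj, if_pos rfl]
    · rw [if_neg hrs]
      obtain ⟨l, hl⟩ := Function.ne_iff.mp hrs
      refine Finset.prod_eq_zero (Finset.mem_erase.mpr ⟨l.2, Finset.mem_univ _⟩) ?_
      rw [hne a r l.1 l.2, hne b s l.1 l.2]
      exact if_neg hl
  have expand : star x ⬝ᵥ ((Matrix.of fun p q => A (p j) (q j) *
        ∏ l ∈ Finset.univ.erase j, (if p l = q l then (1:ℂ) else 0)) *ᵥ x)
      = ∑ p, ∑ q, star (x p) * ((A (p j) (q j) *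
          ∏ l ∈ Finset.univ.erase j, (if p l = q l then (1:ℂ) else 0)) * x q) := by
    simp only [dotProduct, mulVec, Matrix.of_apply, Pi.star_apply, Finset.mul_sum]
  rw [expand]
  rw [sum_pair_reindex σ.symm]
  rw [Fintype.sum_prod_type]
  have step : ∀ (a : Fin (n j)) r,
      (∑ q : Fin (n j) × (∀ l : {l : Fin d // l ≠ j}, Fin (n l.1)),
        star (x (σ.symm (a, r))) * ((A ((σ.symm (a, r)) j) ((σ.symm q) j) *
          ∏ l ∈ Finset.univ.erase j,
            (if (σ.symm (a, r)) l = (σ.symm q) l then (1:ℂ) else 0)) * x (σ.symm q)))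
      = ∑ b, star (redVec j x r a) * (A a b * redVec j x r b) := by
    intro a r
    rw [Fintype.sum_prod_type]
    refine Finset.sum_congr rfl fun b _ => ?_
    simp only [hj, hprod]
    simp only [mul_ite, mul_one, mul_zero, ite_mul, zero_mul, Finset.sum_ite_eq,
      Finset.mem_univ, if_true]
    rfl
  simp only [step]
  rw [Finset.sum_comm]
  refine Finset.sum_congr rfl fun r _ => ?_
  simp only [dotProduct, mulVec, Pi.star_apply, Finset.mul_sum]
end reduction

section reduction2
variable {d : ℕ} {n : Fin d → ℕ}

lemma piSplitAt_symm_at (j : Fin d) (a : Fin (n j))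
    (r : ∀ l : {l : Fin d // l ≠ j}, Fin (n l.1)) :
    ((Equiv.piSplitAt j (fun l => Fin (n l))).symm (a, r)) j = a := by
  simp [Equiv.piSplitAt_symm_apply]

lemma piSplitAt_symm_ne (j : Fin d) (a : Fin (n j))
    (r : ∀ l : {l : Fin d // l ≠ j}, Fin (n l.1)) (l : Fin d) (h : l ≠ j) :
    ((Equiv.piSplitAt j (fun l => Fin (n l))).symm (a, r)) l = r ⟨l, h⟩ := by
  simp [Equiv.piSplitAt_symm_apply, h]

end reduction2

set_option maxHeartbeats 1000000 in
/-- The field of values of a Kronecker sum is the Minkowski sum of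
the fields of values: `𝕎(𝐀) = 𝕎(A₁) + ⋯ + 𝕎(A_d)`. -/
theorem stmt_17 {d : ℕ} (n : Fin d → ℕ)
    (A : ∀ i, Matrix (Fin (n i)) (Fin (n i)) ℂ) :
    fov (kronSum n A)
      = { c | ∃ s : Fin d → ℂ, (∀ i, s i ∈ fov (A i)) ∧ c = ∑ i, s i } := by
  classical
  ext c
  simp only [Set.mem_setOf_eq]
  constructor
  · rintro ⟨x, hx, rfl⟩
    have hsplit : star x ⬝ᵥ (kronSum n A *ᵥ x)
        = ∑ j, star x ⬝ᵥ ((Matrix.of fun p q => A j (p j) (q j) *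
            ∏ l ∈ Finset.univ.erase j, (if p l = q l then (1:ℂ) else 0)) *ᵥ x) := by
      simp only [kronSum]
      rw [dot_sum_mulVec]
    refine ⟨fun j => star x ⬝ᵥ ((Matrix.of fun p q => A j (p j) (q j) *
        ∏ l ∈ Finset.univ.erase j, (if p l = q l then (1:ℂ) else 0)) *ᵥ x),
      fun j => ?_, ?_⟩
    · beta_reduce
      rw [red_form j (A j) x]
      have hnonempty : Nonempty (Fin (n j)) := by
        by_contra hemp
        rw [not_nonempty_iff] at hemp
        haveI : IsEmpty (∀ l, Fin (n l)) := ⟨fun f => hemp.false (f j)⟩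
        rw [show (star x ⬝ᵥ x) = ∑ p, star (x p) * x p from rfl] at hx
        rw [Finset.univ_eq_empty, Finset.sum_empty] at hx
        exact one_ne_zero hx.symm
      obtain ⟨c₀, hc₀⟩ := fov_nonempty (A j)
      set w : (∀ l : {l : Fin d // l ≠ j}, Fin (n l.1)) → ℝ :=
        fun r => ∑ i, Complex.normSq (redVec j x r i) with hwdef
      have hww : ∀ r, star (redVec j x r) ⬝ᵥ (redVec j x r) = ((w r : ℝ) : ℂ) :=
        fun r => dot_star_self _
      have hw0 : ∀ r, 0 ≤ w r := fun r => Finset.sum_nonneg fun i _ => Complex.normSq_nonneg _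
      have hwsum : ∑ r, w r = 1 := by
        have hrd := red_dot j x
        rw [hx] at hrd
        have h2 : ((∑ r, w r : ℝ) : ℂ) = 1 := by
          push_cast
          rw [hrd]
          exact Finset.sum_congr rfl fun r _ => (hww r).symm
        exact_mod_cast h2
      set pts : (∀ l : {l : Fin d // l ≠ j}, Fin (n l.1)) → ℂ := fun r => if w r = 0 then c₀
        else ((w r : ℝ) : ℂ)⁻¹ * (star (redVec j x r) ⬝ᵥ (A j *ᵥ redVec j x r)) with hpts
      have hmem : ∀ r, pts r ∈ fov (A j) := by
        intro r
        simp only [hpts]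
        by_cases h : w r = 0
        · rw [if_pos h]; exact hc₀
        · rw [if_neg h]
          have hpos : 0 < w r := lt_of_le_of_ne (hw0 r) (Ne.symm h)
          set m := Real.sqrt (w r) with hm
          have hmpos : 0 < m := Real.sqrt_pos.mpr hpos
          have hmm : m * m = w r := Real.mul_self_sqrt hpos.le
          have hr : (m⁻¹ * m⁻¹ : ℝ) = (w r)⁻¹ := by rw [← mul_inv, hmm]
          refine ⟨((m⁻¹ : ℝ) : ℂ) • redVec j x r, ?_, ?_⟩
          · rw [dot_smul_smul, hww r, Complex.conj_ofReal]
            have h3 : (m⁻¹ : ℝ) * m⁻¹ * w r = 1 := by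
              rw [hr]; field_simp
            exact_mod_cast h3
          · rw [sesq_smul_smul, Complex.conj_ofReal]
            have h1 : ((m⁻¹ :ℝ) : ℂ) * ((m⁻¹ :ℝ) : ℂ) = (((w r : ℝ)) : ℂ)⁻¹ := by
              rw [← Complex.ofReal_mul, hr, Complex.ofReal_inv]
            rw [h1]
      have hsum : ∑ r, (w r) • pts r
          = ∑ r, star (redVec j x r) ⬝ᵥ (A j *ᵥ redVec j x r) := by
        refine Finset.sum_congr rfl fun r _ => ?_
        by_cases h : w r = 0
        · have hy0 : redVec j x r = 0 := by
            apply dot_star_self_eq_zero'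
            rw [hww r, h]
            simp
          rw [hy0, h]
          simp
        · have hne' : ((w r : ℝ) : ℂ) ≠ 0 := by exact_mod_cast h
          simp only [hpts]
          rw [if_neg h, Complex.real_smul, ← mul_assoc, mul_inv_cancel₀ hne', one_mul]
      rw [← hsum]
      exact (fov_convex (A j)).sum_mem (fun r _ => hw0 r) hwsum (fun r _ => hmem r)
    · beta_reduce
      exact hsplit
  · rintro ⟨s, hs, rfl⟩
    choose xx hxx1 hxx2 using hs
    set X : (∀ l, Fin (n l)) → ℂ := fun p => ∏ i, xx i (p i) with hX
    have hXdot : star X ⬝ᵥ X = 1 := by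
      rw [show (star X ⬝ᵥ X) = ∑ p, star (X p) * X p from rfl]
      have hterm : ∀ p, star (X p) * X p = ∏ i, (star (xx i (p i)) * xx i (p i)) := by
        intro p
        simp only [hX]
        rw [star_prod, ← Finset.prod_mul_distrib]
      simp only [hterm]
      rw [← Fintype.prod_sum (fun i a => star (xx i a) * xx i a)]
      exact Finset.prod_eq_one fun i _ => hxx1 i
    refine ⟨X, hXdot, ?_⟩
    simp only [kronSum]
    rw [dot_sum_mulVec]
    refine Finset.sum_congr rfl fun j _ => ?_
    rw [red_form j (A j) X]
    have hY : ∀ r : (∀ l : {l : Fin d // l ≠ j}, Fin (n l.1)),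
        redVec j X r = (∏ l : {l : Fin d // l ≠ j}, xx l.1 (r l)) • xx j := by
      intro r
      funext a
      show X ((Equiv.piSplitAt j (fun l => Fin (n l))).symm (a, r)) = _
      simp only [hX]
      rw [prod_split j (fun i =>
        xx i (((Equiv.piSplitAt j (fun l => Fin (n l))).symm (a, r)) i))]
      rw [piSplitAt_symm_at]
      rw [Finset.prod_congr rfl (fun l _ => by
        rw [piSplitAt_symm_ne j a r l.1 l.2] :
        ∀ l ∈ Finset.univ, xx l.1 (((Equiv.piSplitAt j (fun l => Fin (n l))).symm (a, r)) l.1)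
          = xx l.1 (r l))]
      rw [Pi.smul_apply, smul_eq_mul, mul_comm]
    simp only [hY]
    have expand : ∀ r : (∀ l : {l : Fin d // l ≠ j}, Fin (n l.1)),
        star ((∏ l : {l : Fin d // l ≠ j}, xx l.1 (r l)) • xx j) ⬝ᵥ
          (A j *ᵥ ((∏ l : {l : Fin d // l ≠ j}, xx l.1 (r l)) • xx j))
        = (∏ l : {l : Fin d // l ≠ j}, (star (xx l.1 (r l)) * xx l.1 (r l)))
            * (star (xx j) ⬝ᵥ (A j *ᵥ xx j)) := by
      intro r
      rw [sesq_smul_smul]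
      congr 1
      rw [← Complex.star_def, star_prod, ← Finset.prod_mul_distrib]
    simp only [expand]
    rw [← Finset.sum_mul]
    have hone : (∑ r : (∀ l : {l : Fin d // l ≠ j}, Fin (n l.1)),
        ∏ l : {l : Fin d // l ≠ j}, (star (xx l.1 (r l)) * xx l.1 (r l))) = 1 := by
      rw [← Fintype.prod_sum (fun (l : {l : Fin d // l ≠ j}) a => star (xx l.1 a) * xx l.1 a)]
      exact Finset.prod_eq_one fun l _ => hxx1 l.1
    rw [hone, one_mul]
    exact hxx2 j
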